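/- For every integer l ≥ 1, the numbers a(m) = Σ_{b=0}^{⌊m/2⌋} C(m,2b)·(2b)!/b! satisfy the three-term recurrence a(2l+2) + 4·(2l)·(2l−1)·a(2l−2) = (8l+3)·a(2l). -/

import Mathlib

/-- `aSeq m = Σ_{b=0}^{⌊m/2⌋} C(m,2b)·(2b)!/b!`. -/
def aSeq (m : ℕ) : ℕ :=
  ∑ b ∈ Finset.range (m / 2 + 1), Nat.choose m (2 * b) * (Nat.factorial (2 * b) / Nat.factorial b)

open Finset Nat

private def T (m b : ℕ) : ℕ := Nat.choose m (2 * b) * Nat.descFactorial (2 * b) b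

private lemma aSeq_eq (m : ℕ) : aSeq m = ∑ b ∈ range (m / 2 + 1), T m b := by
  unfold aSeq T
  refine Finset.sum_congr rfl fun b _ => ?_
  have h := Nat.descFactorial_eq_div (show b ≤ 2 * b by omega)
  rw [show 2 * b - b = b by omega] at h
  rw [h]

private lemma sum_ext (m M : ℕ) (h : m / 2 + 1 ≤ M) :
    (∑ b ∈ range (m / 2 + 1), T m b) = ∑ b ∈ range M, T m b := by
  apply Finset.sum_subset (Finset.range_subset_range.2 h)
  intro b _ hb
  simp only [Finset.mem_range, not_lt] at hb
  have h2 : m < 2 * b := by omega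
  simp [T, Nat.choose_eq_zero_of_lt h2]

private lemma dF_step (c : ℕ) :
    Nat.descFactorial (2 * (c + 1)) (c + 1) = 2 * (2 * c + 1) * Nat.descFactorial (2 * c) c := by
  have h1 : (c + 1)! * (2 * (c + 1)).descFactorial (c + 1) = (2 * (c + 1))! := by
    have := Nat.factorial_mul_descFactorial (show c + 1 ≤ 2 * (c + 1) by omega)
    rwa [show 2 * (c + 1) - (c + 1) = c + 1 by omega] at this
  have h0 : c ! * (2 * c).descFactorial c = (2 * c)! := by
    have := Nat.factorial_mul_descFactorial (show c ≤ 2 * c by omega)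
    rwa [show 2 * c - c = c by omega] at this
  apply Nat.eq_of_mul_eq_mul_left (Nat.factorial_pos (c + 1))
  rw [h1, show 2 * (c + 1) = 2 * c + 1 + 1 by ring, Nat.factorial_succ, Nat.factorial_succ,
    ← h0, Nat.factorial_succ]
  ring

private lemma term_step (m c : ℕ) :
    Nat.choose (m + 1) (2 * c + 1) * Nat.descFactorial (2 * (c + 1)) (c + 1)
      = 2 * (m + 1) * T m c := by
  rw [dF_step c]
  have h := Nat.add_one_mul_choose_eq m (2 * c)
  unfold T
  calc Nat.choose (m + 1) (2 * c + 1) * (2 * (2 * c + 1) * Nat.descFactorial (2 * c) c)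
      = 2 * (Nat.choose (m + 1) (2 * c + 1) * (2 * c + 1)) * Nat.descFactorial (2 * c) c := by
        ring
    _ = 2 * ((m + 1) * Nat.choose m (2 * c)) * Nat.descFactorial (2 * c) c := by rw [h]
    _ = 2 * (m + 1) * (Nat.choose m (2 * c) * Nat.descFactorial (2 * c) c) := by ring

private lemma aSeq_rec (m : ℕ) :
    aSeq (m + 2) = aSeq (m + 1) + 2 * (m + 1) * aSeq m := by
  rw [aSeq_eq, aSeq_eq, aSeq_eq]
  rw [show (m + 2) / 2 + 1 = (m / 2 + 1) + 1 by omega]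
  rw [sum_ext (m + 1) (m / 2 + 2) (by omega)]
  rw [show m / 2 + 2 = (m / 2 + 1) + 1 by ring]
  rw [Finset.sum_range_succ' (fun b => T (m + 2) b) (m / 2 + 1),
      Finset.sum_range_succ' (fun b => T (m + 1) b) (m / 2 + 1)]
  have hterm : ∀ c, T (m + 2) (c + 1) = 2 * (m + 1) * T m c + T (m + 1) (c + 1) := by
    intro c
    have hp : Nat.choose (m + 2) (2 * (c + 1))
        = Nat.choose (m + 1) (2 * c + 1) + Nat.choose (m + 1) (2 * (c + 1)) := by
      rw [show 2 * (c + 1) = 2 * c + 1 + 1 by ring, show m + 2 = m + 1 + 1 from rfl,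
        Nat.choose_succ_succ]
    show Nat.choose (m + 2) (2 * (c + 1)) * Nat.descFactorial (2 * (c + 1)) (c + 1) = _
    rw [hp, add_mul, term_step]
    rfl
  have h0 : T (m + 2) 0 = T (m + 1) 0 := by simp [T]
  simp only [hterm, h0, Finset.sum_add_distrib, ← Finset.mul_sum]
  ring

private lemma aSeq_rec' (n a b : ℕ) (h1 : a = n + 2) (h2 : b = n + 1) :
    aSeq a = aSeq b + 2 * b * aSeq n := by
  subst h1 h2; exact aSeq_rec n

theorem aSeq_even_recurrence (l : ℕ) (hl : 1 ≤ l) :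
    aSeq (2 * l + 2) + 4 * (2 * l) * (2 * l - 1) * aSeq (2 * l - 2)
      = (8 * l + 3) * aSeq (2 * l) := by
  obtain ⟨k, rfl⟩ : ∃ k, l = k + 1 := ⟨l - 1, by omega⟩
  rw [show 2 * (k + 1) + 2 = 2 * k + 4 by ring, show 2 * (k + 1) - 2 = 2 * k by omega,
    show 2 * (k + 1) - 1 = 2 * k + 1 by omega, show 2 * (k + 1) = 2 * k + 2 by ring]
  have e3 : aSeq (2 * k + 4) = aSeq (2 * k + 3) + 2 * (2 * k + 3) * aSeq (2 * k + 2) :=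
    aSeq_rec' (2 * k + 2) _ _ (by ring) (by ring)
  have e2 : aSeq (2 * k + 3) = aSeq (2 * k + 2) + 2 * (2 * k + 2) * aSeq (2 * k + 1) :=
    aSeq_rec' (2 * k + 1) _ _ (by ring) (by ring)
  have e1 : aSeq (2 * k + 2) = aSeq (2 * k + 1) + 2 * (2 * k + 1) * aSeq (2 * k) :=
    aSeq_rec' (2 * k) _ _ (by ring) (by ring)
  rw [e3, e2, e1]
  ring
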